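/- arXiv:1207.1730 — 2 statements merged into one kernel-verified Lean document; each statement's English description precedes it below -/
import Mathlib

section
/- For n ≥ 1, the real vector space of ℝ³-valued homogeneous monogenic polynomials of degree n on ℝ³ has dimension 2n+3 over ℝ, while for n = 0 it has dimension 3. -/
open scoped Quaternion
open MeasureTheory

noncomputable section

/-- Points of `ℝ³`, identified with quaternions `x₀ + x₁e₁ + x₂e₂` with zero `e₃`-part. -/
abbrev R3 := EuclideanSpace ℝ (Fin 3)

/-- The quaternion unit `e₁`. -/
def e1 : ℍ[ℝ] := ⟨0, 1, 0, 0⟩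
/-- The quaternion unit `e₂`. -/
def e2 : ℍ[ℝ] := ⟨0, 0, 1, 0⟩

/-- Partial derivative `∂ᵢ` of a function on `ℝ³`. -/
def pd {E : Type*} [NormedAddCommGroup E] [NormedSpace ℝ E]
    (i : Fin 3) (f : R3 → E) (x : R3) : E :=
  fderiv ℝ f x (EuclideanSpace.single i 1)

/-- `D̄f = ∂₀f + e₁∂₁f + e₂∂₂f` (acting from the left). -/
def DbarL (f : R3 → ℍ[ℝ]) (x : R3) : ℍ[ℝ] :=
  pd 0 f x + e1 * pd 1 f x + e2 * pd 2 f x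

/-- `fD̄ = ∂₀f + (∂₁f)e₁ + (∂₂f)e₂` (acting from the right). -/
def DbarR (f : R3 → ℍ[ℝ]) (x : R3) : ℍ[ℝ] :=
  pd 0 f x + pd 1 f x * e1 + pd 2 f x * e2

/-- `Df = ∂₀f − e₁∂₁f − e₂∂₂f`. -/
def DL (f : R3 → ℍ[ℝ]) (x : R3) : ℍ[ℝ] :=
  pd 0 f x - e1 * pd 1 f x - e2 * pd 2 f x

/-- The quaternion `a + b e₁ + c e₂` (zero `e₃`-part). -/
def mkQ (a b c : ℝ) : ℍ[ℝ] := ⟨a, b, c, 0⟩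

/-- `ℝ³`-valued homogeneous monogenic polynomials of degree `n`: each component is a
homogeneous polynomial of degree `n`, the `e₃`-component vanishes, and `D̄f = 0`. -/
def MonoPoly (n : ℕ) : Set (R3 → ℍ[ℝ]) :=
  {f | (∃ p₀ p₁ p₂ : MvPolynomial (Fin 3) ℝ,
          p₀.IsHomogeneous n ∧ p₁.IsHomogeneous n ∧ p₂.IsHomogeneous n ∧
          ∀ x : R3, f x = mkQ (MvPolynomial.eval (fun i => x i) p₀)
            (MvPolynomial.eval (fun i => x i) p₁) (MvPolynomial.eval (fun i => x i) p₂)) ∧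
      ∀ x, DbarL f x = 0}

/-- `ℝ³`-valued homogeneous antimonogenic polynomials of degree `n` (`Df = 0`). -/
def AntiPoly (n : ℕ) : Set (R3 → ℍ[ℝ]) :=
  {f | (∃ p₀ p₁ p₂ : MvPolynomial (Fin 3) ℝ,
          p₀.IsHomogeneous n ∧ p₁.IsHomogeneous n ∧ p₂.IsHomogeneous n ∧
          ∀ x : R3, f x = mkQ (MvPolynomial.eval (fun i => x i) p₀)
            (MvPolynomial.eval (fun i => x i) p₁) (MvPolynomial.eval (fun i => x i) p₂)) ∧
      ∀ x, DL f x = 0}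

/-- `ℝ³`-valued homogeneous harmonic polynomials of degree `n`. -/
def HarmPoly (n : ℕ) : Set (R3 → ℍ[ℝ]) :=
  {f | (∃ p₀ p₁ p₂ : MvPolynomial (Fin 3) ℝ,
          p₀.IsHomogeneous n ∧ p₁.IsHomogeneous n ∧ p₂.IsHomogeneous n ∧
          ∀ x : R3, f x = mkQ (MvPolynomial.eval (fun i => x i) p₀)
            (MvPolynomial.eval (fun i => x i) p₁) (MvPolynomial.eval (fun i => x i) p₂)) ∧
      ∀ x, pd 0 (pd 0 f) x + pd 1 (pd 1 f) x + pd 2 (pd 2 f) x = 0}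

open MvPolynomial

def Ev (p : MvPolynomial (Fin 3) ℝ) (x : R3) : ℝ := eval (fun i => x i) p

theorem hasFDerivAt_Ev (p : MvPolynomial (Fin 3) ℝ) (x : R3) :
    HasFDerivAt (Ev p) (∑ i, Ev (pderiv i p) x • (EuclideanSpace.proj i : R3 →L[ℝ] ℝ)) x := by
  induction p using MvPolynomial.induction_on with
  | C a =>
      have h1 : Ev (C a : MvPolynomial (Fin 3) ℝ) = fun _ : R3 => a := by
        funext y; simp [Ev]
      rw [h1]
      convert hasFDerivAt_const (𝕜 := ℝ) a x using 1
      simp [Ev]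
  | add p q hp hq =>
      have h1 : Ev (p + q) = fun y : R3 => Ev p y + Ev q y := by funext y; simp [Ev]
      rw [h1]
      refine (hp.add hq).congr_fderiv (Eq.symm ?_)
      rw [← Finset.sum_add_distrib]
      refine Finset.sum_congr rfl fun i _ => ?_
      simp [Ev, add_smul]
  | mul_X p j hp =>
      have h1 : Ev (p * X j) = fun y : R3 => Ev p y * y j := by funext y; simp [Ev]
      rw [h1]
      have hX : HasFDerivAt (fun y : R3 => y j) (EuclideanSpace.proj j : R3 →L[ℝ] ℝ) x :=
        (EuclideanSpace.proj j : R3 →L[ℝ] ℝ).hasFDerivAt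
      refine (hp.mul' hX).congr_fderiv (Eq.symm ?_)
      ext v
      simp only [ContinuousLinearMap.coe_sum', Finset.sum_apply,
        ContinuousLinearMap.coe_smul', Pi.smul_apply, PiLp.proj_apply,
        ContinuousLinearMap.add_apply, ContinuousLinearMap.smulRight_apply, smul_eq_mul]
      classical
      have : ∀ i : Fin 3, Ev (pderiv i (p * X j)) x * v i
          = Ev (pderiv i p) x * x j * v i + Ev p x * (if j = i then 1 else 0) * v i := by
        intro i
        rw [pderiv_mul, pderiv_X]
        by_cases h : j = i
        · subst h; simp [Ev, Pi.single_apply]; ring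
        · simp [Ev, h, Pi.single_apply]
      rw [Finset.sum_congr rfl fun i _ => this i, Finset.sum_add_distrib]
      have h2 : ∑ i : Fin 3, Ev p x * (if j = i then 1 else 0) * v i = Ev p x * v j := by
        rw [Finset.sum_eq_single j (fun b _ hb => by simp [Ne.symm hb]) (by simp)]
        simp
      rw [h2, add_comm]
      congr 1
      rw [op_smul_eq_mul, Finset.sum_mul]
      exact Finset.sum_congr rfl fun i _ => by ring

theorem differentiableAt_Ev (p : MvPolynomial (Fin 3) ℝ) (x : R3) :
    DifferentiableAt ℝ (Ev p) x := (hasFDerivAt_Ev p x).differentiableAt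

theorem pd_Ev (i : Fin 3) (p : MvPolynomial (Fin 3) ℝ) (x : R3) :
    pd i (Ev p) x = Ev (pderiv i p) x := by
  rw [pd, (hasFDerivAt_Ev p x).fderiv]
  classical
  simp [EuclideanSpace.single_apply, Finset.sum_ite_eq']


variable {p q : MvPolynomial (Fin 3) ℝ}

theorem deg3 (d : Fin 3 →₀ ℕ) : d.degree = d 0 + d 1 + d 2 := by
  rw [Finsupp.degree_apply, Finset.sum_subset (Finset.subset_univ d.support)
    (fun i _ hi => Finsupp.notMem_support_iff.mp hi)]
  exact Fin.sum_univ_three d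

theorem degree_of_mem_support {n : ℕ} (hp : p.IsHomogeneous n) {d : Fin 3 →₀ ℕ}
    (hd : d ∈ p.support) : d.degree = n := by
  rw [Finsupp.degree_eq_weight_one]
  exact hp (MvPolynomial.mem_support_iff.mp hd)

theorem pderiv2_monomial (i : Fin 3) (s : Fin 3 →₀ ℕ) (r : ℝ) :
    pderiv i (pderiv i (monomial s r)) =
      monomial (s - Finsupp.single i 2) (r * (s i) * ((s i - 1 : ℕ))) := by
  rw [pderiv_monomial, pderiv_monomial]
  congr 1
  · rw [tsub_tsub, ← Finsupp.single_add]
  · simp [Finsupp.tsub_apply, Finsupp.single_apply, mul_assoc]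

theorem deg_add (a b : Fin 3 →₀ ℕ) : (a + b).degree = a.degree + b.degree := by
  rw [deg3, deg3, deg3]
  simp only [Finsupp.add_apply]
  ring

theorem single_add_tsub {d : Fin 3 →₀ ℕ} {i : Fin 3} (h : d i ≠ 0) :
    (d - Finsupp.single i 1) + Finsupp.single i 1 = d := by
  ext j
  rw [Finsupp.add_apply, Finsupp.tsub_apply, Finsupp.single_apply]
  by_cases hj : i = j
  · subst hj; simp; omega
  · simp [hj]

theorem degree_tsub_single {d : Fin 3 →₀ ℕ} {i : Fin 3} (h : d i ≠ 0) :
    (d - Finsupp.single i 1).degree + 1 = d.degree := by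
  conv_rhs => rw [← single_add_tsub h]
  rw [deg_add]
  congr 1
  rw [deg3]
  fin_cases i <;> simp

theorem euler_monomial (d : Fin 3 →₀ ℕ) (c : ℝ) :
    ∑ i : Fin 3, X i * pderiv i (monomial d c) = d.degree • monomial d c := by
  have key : ∀ i : Fin 3, X i * pderiv i (monomial d c) = (d i) • monomial d c := by
    intro i
    rw [pderiv_monomial, X, monomial_mul]
    by_cases h : d i = 0
    · simp [h]
    · have hd : Finsupp.single i 1 + (d - Finsupp.single i 1) = d := by
        rw [add_comm]; exact single_add_tsub h
      rw [hd, one_mul]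
      rw [show (d i) • monomial d c = monomial d ((d i : ℕ) • c) by rw [← map_nsmul]]
      congr 1
      simp [nsmul_eq_mul, mul_comm]
  rw [Finset.sum_congr rfl fun i _ => key i, deg3, Fin.sum_univ_three]
  simp only [add_smul]

theorem euler {n : ℕ} (hp : p.IsHomogeneous n) :
    ∑ i : Fin 3, X i * pderiv i p = n • p := by
  conv_lhs => rw [p.as_sum]
  simp only [map_sum, Finset.mul_sum]
  rw [Finset.sum_comm]
  have h1 : ∀ d ∈ p.support,
      ∑ i : Fin 3, X i * pderiv i (monomial d (coeff d p)) = n • monomial d (coeff d p) :=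
    fun d hd => by rw [euler_monomial, degree_of_mem_support hp hd]
  rw [Finset.sum_congr rfl h1, ← Finset.smul_sum, ← p.as_sum]

theorem pderiv_isHomogeneous {n : ℕ} (i : Fin 3) (hp : p.IsHomogeneous (n + 1)) :
    (pderiv i p).IsHomogeneous n := by
  conv in pderiv i p => rw [p.as_sum]
  rw [map_sum]
  apply MvPolynomial.IsHomogeneous.sum
  intro d hd
  rw [pderiv_monomial]
  by_cases h : d i = 0
  · rw [h]; simp only [Nat.cast_zero, mul_zero, map_zero]
    exact MvPolynomial.isHomogeneous_zero _ _ n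
  · apply isHomogeneous_monomial
    have hdeg := degree_of_mem_support hp hd
    have h2 := degree_tsub_single h
    omega

theorem pderiv_eq_zero_of_isHomogeneous_zero (i : Fin 3) (hp : p.IsHomogeneous 0) :
    pderiv i p = 0 := by
  conv in pderiv i p => rw [p.as_sum]
  rw [map_sum]
  apply Finset.sum_eq_zero
  intro d hd
  have hdeg := degree_of_mem_support hp hd
  rw [Finsupp.degree_eq_zero_iff] at hdeg
  subst hdeg
  rw [pderiv_monomial]
  simp

theorem pderiv_comm (i j : Fin 3) (p : MvPolynomial (Fin 3) ℝ) :
    pderiv i (pderiv j p) = pderiv j (pderiv i p) := by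
  conv_lhs => rw [p.as_sum]
  conv_rhs => rw [p.as_sum]
  rw [map_sum, map_sum, map_sum, map_sum]
  refine Finset.sum_congr rfl fun d _ => ?_
  rw [pderiv_monomial, pderiv_monomial, pderiv_monomial, pderiv_monomial]
  by_cases hij : i = j
  · subst hij; rfl
  · congr 1
    · rw [tsub_tsub, tsub_tsub, add_comm]
    · rw [Finsupp.tsub_apply, Finsupp.tsub_apply, Finsupp.single_apply, Finsupp.single_apply]
      simp only [if_neg hij, if_neg (Ne.symm hij), Nat.sub_zero]
      ring


def degSet (m : ℕ) : Set (Fin 3 →₀ ℕ) := {d | d.degree = m}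

theorem degree_eq_sum (d : Fin 3 →₀ ℕ) : (d.sum fun _ => id) = d.degree := rfl

def symEquiv (m : ℕ) : degSet m ≃ Sym (Fin 3) m where
  toFun d := ⟨Finsupp.toMultiset d.1, by rw [Finsupp.card_toMultiset, degree_eq_sum]; exact d.2⟩
  invFun s := ⟨Multiset.toFinsupp s.1, by
    show Finsupp.degree _ = m
    rw [← degree_eq_sum, ← Finsupp.card_toMultiset, Multiset.toFinsupp_toMultiset]
    exact s.2⟩
  left_inv d := Subtype.ext (by simp)
  right_inv s := Subtype.ext (by simp)

instance (m : ℕ) : Fintype (degSet m) := Fintype.ofEquiv _ (symEquiv m).symm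

theorem card_degSet (m : ℕ) : Fintype.card (degSet m) = (m + 2).choose 2 := by
  rw [Fintype.card_congr (symEquiv m), Sym.card_sym_eq_multichoose, Nat.multichoose_eq]
  simp only [Fintype.card_fin]
  rw [show 3 + m - 1 = m + 2 by omega]
  have h := Nat.choose_symm (n := m + 2) (k := 2) (by omega)
  rw [show m + 2 - 2 = m from by omega] at h
  exact h

theorem finrank_homog (m : ℕ) :
    Module.finrank ℝ (homogeneousSubmodule (Fin 3) ℝ m) = (m + 2).choose 2 := by
  have he : homogeneousSubmodule (Fin 3) ℝ m = restrictSupport ℝ (degSet m) :=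
    homogeneousSubmodule_eq_finsupp_supported (Fin 3) ℝ m
  rw [he, Module.finrank_eq_card_basis (MvPolynomial.basisRestrictSupport ℝ (degSet m))]
  exact card_degSet m

instance (m : ℕ) : Module.Finite ℝ (homogeneousSubmodule (Fin 3) ℝ m) := by
  have he : homogeneousSubmodule (Fin 3) ℝ m = restrictSupport ℝ (degSet m) :=
    homogeneousSubmodule_eq_finsupp_supported (Fin 3) ℝ m
  rw [he]
  exact Module.Finite.of_basis (MvPolynomial.basisRestrictSupport ℝ (degSet m))

open MvPolynomial

def lapL : MvPolynomial (Fin 3) ℝ →ₗ[ℝ] MvPolynomial (Fin 3) ℝ :=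
  ∑ i : Fin 3, ((pderiv i (R := ℝ)).toLinearMap.comp (pderiv i).toLinearMap)

theorem lapL_apply (p : MvPolynomial (Fin 3) ℝ) :
    lapL p = pderiv 0 (pderiv 0 p) + pderiv 1 (pderiv 1 p) + pderiv 2 (pderiv 2 p) := by
  simp [lapL, Fin.sum_univ_three]

theorem degree_single (i : Fin 3) (n : ℕ) : (Finsupp.single i n).degree = n := by
  rw [deg3]; fin_cases i <;> simp

theorem lapL_isHomogeneous {p : MvPolynomial (Fin 3) ℝ} {k : ℕ}
    (hp : p.IsHomogeneous (k + 2)) : (lapL p).IsHomogeneous k := by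
  rw [lapL_apply]
  have h : ∀ i : Fin 3, (pderiv i (pderiv i p)).IsHomogeneous k := fun i =>
    pderiv_isHomogeneous i (pderiv_isHomogeneous i hp)
  exact ((h 0).add (h 1)).add (h 2)

theorem monomial_mem_image (k : ℕ) (N : ℕ) : ∀ d : Fin 3 →₀ ℕ, ∀ r : ℝ,
    d 1 + d 2 ≤ N → d.degree = k →
    (monomial d r) ∈ Submodule.map lapL (homogeneousSubmodule (Fin 3) ℝ (k + 2)) := by
  induction N using Nat.strong_induction_on with
  | _ N ih =>
  intro d r hN hdeg
  set d' : Fin 3 →₀ ℕ := d + Finsupp.single 0 2 with hd'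
  have hd'0 : d' 0 = d 0 + 2 := by simp [hd']
  have hd'1 : d' 1 = d 1 := by simp [hd', Finsupp.single_apply]
  have hd'2 : d' 2 = d 2 := by simp [hd', Finsupp.single_apply]
  have hd'deg : d'.degree = k + 2 := by rw [hd', deg_add, degree_single, hdeg]
  set r' : ℝ := r / ((d 0 + 2) * (d 0 + 1)) with hr'
  have hmem : (monomial d' r') ∈ homogeneousSubmodule (Fin 3) ℝ (k + 2) :=
    (mem_homogeneousSubmodule _ _).mpr (isHomogeneous_monomial _ hd'deg)
  have him : lapL (monomial d' r') ∈
      Submodule.map lapL (homogeneousSubmodule (Fin 3) ℝ (k + 2)) :=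
    Submodule.mem_map_of_mem hmem
  have h0 : pderiv 0 (pderiv 0 (monomial d' r')) = monomial d r := by
    rw [pderiv2_monomial]
    congr 1
    · rw [hd', add_tsub_cancel_right]
    · rw [hd'0]
      rw [show d 0 + 2 - 1 = d 0 + 1 from by omega, hr']
      have h1 : ((d 0 : ℝ) + 2) ≠ 0 := by positivity
      have h2 : ((d 0 : ℝ) + 1) ≠ 0 := by positivity
      push_cast
      field_simp
  have hT : ∀ i : Fin 3, i = 1 ∨ i = 2 → pderiv i (pderiv i (monomial d' r')) ∈
      Submodule.map lapL (homogeneousSubmodule (Fin 3) ℝ (k + 2)) := by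
    intro i hi
    rw [pderiv2_monomial]
    by_cases hdi : d' i ≤ 1
    · have : (r' * (d' i) * ((d' i - 1 : ℕ)) : ℝ) = 0 := by
        interval_cases h : d' i <;> simp
      rw [this, map_zero]
      exact Submodule.zero_mem _
    · push_neg at hdi
      set e : Fin 3 →₀ ℕ := d' - Finsupp.single i 2 with he
      have he0 : e 0 = d 0 + 2 := by
        rw [he, Finsupp.tsub_apply, Finsupp.single_apply, hd'0]
        rcases hi with hi | hi <;> subst hi <;> simp
      have he12 : e 1 + e 2 = d 1 + d 2 - 2 := by
        rw [he, Finsupp.tsub_apply, Finsupp.tsub_apply, Finsupp.single_apply,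
          Finsupp.single_apply, hd'1, hd'2]
        rcases hi with hi | hi <;> subst hi <;> simp <;> omega
      have hd12 : 2 ≤ d 1 + d 2 := by
        rcases hi with hi | hi <;> subst hi
        · rw [hd'1] at hdi; omega
        · rw [hd'2] at hdi; omega
      have hedeg : e.degree = k := by
        have h1 := deg3 e
        have h2 := deg3 d
        rw [he0] at h1
        omega
      exact ih (d 1 + d 2 - 1) (by omega) e _ (by omega) hedeg
  have key : monomial d r = lapL (monomial d' r')
      - pderiv 1 (pderiv 1 (monomial d' r')) - pderiv 2 (pderiv 2 (monomial d' r')) := by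
    rw [lapL_apply, h0]; ring
  rw [key]
  exact Submodule.sub_mem _ (Submodule.sub_mem _ him (hT 1 (Or.inl rfl))) (hT 2 (Or.inr rfl))

theorem map_lapL (k : ℕ) :
    Submodule.map lapL (homogeneousSubmodule (Fin 3) ℝ (k + 2)) =
      homogeneousSubmodule (Fin 3) ℝ k := by
  apply le_antisymm
  · rintro q ⟨p, hp, rfl⟩
    exact (mem_homogeneousSubmodule _ _).mpr
      (lapL_isHomogeneous ((mem_homogeneousSubmodule _ _).mp hp))
  · intro q hq
    have hq' := (mem_homogeneousSubmodule _ _).mp hq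
    rw [q.as_sum]
    apply Submodule.sum_mem
    intro d hd
    exact monomial_mem_image k (d 1 + d 2) d _ le_rfl (degree_of_mem_support hq' hd)

theorem finrank_harm (m : ℕ) (hm : 1 ≤ m) :
    Module.finrank ℝ
      (LinearMap.ker (lapL.domRestrict (homogeneousSubmodule (Fin 3) ℝ m))) = 2 * m + 1 := by
  rcases eq_or_lt_of_le hm with h1 | h2
  · -- m = 1
    subst h1
    have hker : LinearMap.ker (lapL.domRestrict (homogeneousSubmodule (Fin 3) ℝ 1)) = ⊤ := by
      rw [eq_top_iff]
      rintro ⟨p, hp⟩ -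
      rw [LinearMap.mem_ker, LinearMap.domRestrict_apply, lapL_apply]
      have hz : ∀ i : Fin 3, pderiv i (pderiv i p) = 0 := fun i =>
        pderiv_eq_zero_of_isHomogeneous_zero i
          (pderiv_isHomogeneous (n := 0) i ((mem_homogeneousSubmodule _ _).mp hp))
      rw [hz 0, hz 1, hz 2]; simp
    rw [hker, finrank_top, finrank_homog]
    decide
  · obtain ⟨k, rfl⟩ : ∃ k, m = k + 2 := ⟨m - 2, by omega⟩
    have hrn := LinearMap.finrank_range_add_finrank_ker
      (lapL.domRestrict (homogeneousSubmodule (Fin 3) ℝ (k + 2)))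
    rw [LinearMap.range_domRestrict, map_lapL] at hrn
    rw [finrank_homog, finrank_homog] at hrn
    have c1 : (k + 2 + 2).choose 2 = (k + 2).choose 2 + 2 * k + 5 := by
      simp [Nat.choose_succ_succ, Nat.choose_one_right, Nat.choose_zero_right]
      omega
    omega

-- chunk 5
def EvQ (p₀ p₁ p₂ : MvPolynomial (Fin 3) ℝ) (x : R3) : ℍ[ℝ] :=
  mkQ (Ev p₀ x) (Ev p₁ x) (Ev p₂ x)

theorem mkQ_eq (a b c : ℝ) : mkQ a b c = a • (1 : ℍ[ℝ]) + b • e1 + c • e2 := by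
  apply Quaternion.ext <;> simp [mkQ, show e1.re = 0 from rfl, show e1.imI = 1 from rfl,
    show e1.imJ = 0 from rfl, show e1.imK = 0 from rfl, show e2.re = 0 from rfl,
    show e2.imI = 0 from rfl, show e2.imJ = 1 from rfl, show e2.imK = 0 from rfl]

theorem pd_EvQ (i : Fin 3) (p₀ p₁ p₂ : MvPolynomial (Fin 3) ℝ) (x : R3) :
    pd i (EvQ p₀ p₁ p₂) x = EvQ (pderiv i p₀) (pderiv i p₁) (pderiv i p₂) x := by
  have h1 : EvQ p₀ p₁ p₂ = fun y => Ev p₀ y • (1 : ℍ[ℝ]) + Ev p₁ y • e1 + Ev p₂ y • e2 :=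
    funext fun y => mkQ_eq _ _ _
  have H := (((hasFDerivAt_Ev p₀ x).smul_const (1 : ℍ[ℝ])).add
    ((hasFDerivAt_Ev p₁ x).smul_const e1)).add ((hasFDerivAt_Ev p₂ x).smul_const e2)
  rw [pd, h1, (show HasFDerivAt (fun y => Ev p₀ y • (1 : ℍ[ℝ]) + Ev p₁ y • e1 + Ev p₂ y • e2) _ x from H).fderiv]
  have hL : ∀ p : MvPolynomial (Fin 3) ℝ,
      (∑ j, Ev (pderiv j p) x • (EuclideanSpace.proj j : R3 →L[ℝ] ℝ))
        (EuclideanSpace.single i 1) = Ev (pderiv i p) x := by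
    intro p
    rw [← (hasFDerivAt_Ev p x).fderiv]
    exact pd_Ev i p x
  simp only [ContinuousLinearMap.add_apply, ContinuousLinearMap.smulRight_apply]
  rw [hL p₀, hL p₁, hL p₂, EvQ, mkQ_eq]

theorem e1_mul (q : ℍ[ℝ]) : e1 * q = ⟨-q.imI, q.re, -q.imK, q.imJ⟩ := by
  apply Quaternion.ext <;> simp [Quaternion.re_mul, Quaternion.imI_mul,
    Quaternion.imJ_mul, Quaternion.imK_mul, show e1.re = 0 from rfl, show e1.imI = 1 from rfl,
    show e1.imJ = 0 from rfl, show e1.imK = 0 from rfl]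

theorem e2_mul (q : ℍ[ℝ]) : e2 * q = ⟨-q.imJ, q.imK, q.re, -q.imI⟩ := by
  apply Quaternion.ext <;> simp [Quaternion.re_mul, Quaternion.imI_mul,
    Quaternion.imJ_mul, Quaternion.imK_mul, show e2.re = 0 from rfl, show e2.imI = 0 from rfl,
    show e2.imJ = 1 from rfl, show e2.imK = 0 from rfl]

theorem Ev_add (p q : MvPolynomial (Fin 3) ℝ) (x : R3) : Ev (p + q) x = Ev p x + Ev q x := by
  simp [Ev]

theorem Ev_sub (p q : MvPolynomial (Fin 3) ℝ) (x : R3) : Ev (p - q) x = Ev p x - Ev q x := by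
  simp [Ev]

theorem Ev_neg (p : MvPolynomial (Fin 3) ℝ) (x : R3) : Ev (-p) x = -Ev p x := by
  simp [Ev]

theorem DbarL_EvQ (p₀ p₁ p₂ : MvPolynomial (Fin 3) ℝ) (x : R3) :
    DbarL (EvQ p₀ p₁ p₂) x =
      ⟨Ev (pderiv 0 p₀ - pderiv 1 p₁ - pderiv 2 p₂) x,
       Ev (pderiv 0 p₁ + pderiv 1 p₀) x,
       Ev (pderiv 0 p₂ + pderiv 2 p₀) x,
       Ev (pderiv 1 p₂ - pderiv 2 p₁) x⟩ := by
  rw [DbarL, pd_EvQ, pd_EvQ, pd_EvQ, e1_mul, e2_mul]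
  apply Quaternion.ext <;> simp only [Quaternion.re_add,
    Quaternion.imI_add, Quaternion.imJ_add, Quaternion.imK_add] <;> (show _ + _ + _ = _) <;> simp only [EvQ, mkQ, Ev_add, Ev_sub]
  all_goals ring

theorem eq_zero_of_Ev (p : MvPolynomial (Fin 3) ℝ) (h : ∀ x : R3, Ev p x = 0) : p = 0 := by
  apply MvPolynomial.funext (q := 0)
  intro v
  have := h ((WithLp.equiv 2 (Fin 3 → ℝ)).symm v)
  simpa [Ev] using this

def Phi (n : ℕ) :
    (LinearMap.ker (lapL.domRestrict (homogeneousSubmodule (Fin 3) ℝ (n + 1)))) →ₗ[ℝ]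
      (R3 → ℍ[ℝ]) where
  toFun h := EvQ (pderiv 0 (h.1.1 : MvPolynomial (Fin 3) ℝ))
    (-(pderiv 1 h.1.1)) (-(pderiv 2 h.1.1))
  map_add' a b := by
    funext x
    have hab : ((a + b).1.1 : MvPolynomial (Fin 3) ℝ) = a.1.1 + b.1.1 := rfl
    show EvQ _ _ _ x = EvQ _ _ _ x + EvQ _ _ _ x
    rw [hab, map_add, map_add, map_add]
    apply Quaternion.ext <;> simp only [Quaternion.re_add,
      Quaternion.imI_add, Quaternion.imJ_add, Quaternion.imK_add] <;> simp [EvQ, mkQ, Ev]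
    all_goals ring
  map_smul' r a := by
    funext x
    have har : ((r • a).1.1 : MvPolynomial (Fin 3) ℝ) = r • a.1.1 := rfl
    show EvQ _ _ _ x = r • EvQ _ _ _ x
    rw [har, Derivation.map_smul, Derivation.map_smul, Derivation.map_smul]
    apply Quaternion.ext <;> simp only [Quaternion.re_smul,
      Quaternion.imI_smul, Quaternion.imJ_smul, Quaternion.imK_smul] <;> simp [EvQ, mkQ, Ev]

theorem Phi_mem (n : ℕ)
    (h : LinearMap.ker (lapL.domRestrict (homogeneousSubmodule (Fin 3) ℝ (n + 1)))) :
    Phi n h ∈ MonoPoly n := by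
  set q : MvPolynomial (Fin 3) ℝ := h.1.1 with hqdef
  have hq : q.IsHomogeneous (n + 1) := (mem_homogeneousSubmodule _ _).mp h.1.2
  have hlap : lapL q = 0 := h.2
  refine ⟨⟨pderiv 0 q, -(pderiv 1 q), -(pderiv 2 q), pderiv_isHomogeneous 0 hq,
    (pderiv_isHomogeneous 1 hq).neg, (pderiv_isHomogeneous 2 hq).neg, fun x => rfl⟩, ?_⟩
  intro x
  show DbarL (EvQ _ _ _) x = 0
  rw [DbarL_EvQ]
  have c0 : pderiv 0 (pderiv 0 q) - pderiv 1 (-(pderiv 1 q)) - pderiv 2 (-(pderiv 2 q)) = 0 := by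
    rw [map_neg, map_neg, sub_neg_eq_add, sub_neg_eq_add, ← lapL_apply]; exact hlap
  have c1 : pderiv 0 (-(pderiv 1 q)) + pderiv 1 (pderiv 0 q) = 0 := by
    rw [map_neg, pderiv_comm]; ring
  have c2 : pderiv 0 (-(pderiv 2 q)) + pderiv 2 (pderiv 0 q) = 0 := by
    rw [map_neg, pderiv_comm]; ring
  have c3 : pderiv 1 (-(pderiv 2 q)) - pderiv 2 (-(pderiv 1 q)) = 0 := by
    rw [map_neg, map_neg, pderiv_comm]; ring
  rw [c0, c1, c2, c3]
  show (⟨Ev 0 x, Ev 0 x, Ev 0 x, Ev 0 x⟩ : ℍ[ℝ]) = 0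
  have hEv0 : Ev (0 : MvPolynomial (Fin 3) ℝ) x = 0 := by simp [Ev]
  rw [hEv0]
  rfl

theorem Phi_inj (n : ℕ) : Function.Injective (Phi n) := by
  rw [injective_iff_map_eq_zero]
  intro h h0
  set q : MvPolynomial (Fin 3) ℝ := h.1.1 with hqdef
  have hq : q.IsHomogeneous (n + 1) := (mem_homogeneousSubmodule _ _).mp h.1.2
  have hx : ∀ x : R3, EvQ (pderiv 0 q) (-(pderiv 1 q)) (-(pderiv 2 q)) x = 0 :=
    fun x => congrFun h0 x
  have hE : ∀ i : Fin 3, pderiv i q = 0 := by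
    intro i
    fin_cases i
    · exact eq_zero_of_Ev _ fun x => by
        have := congrArg QuaternionAlgebra.re (hx x); simpa [EvQ, mkQ] using this
    · have := eq_zero_of_Ev (-(pderiv 1 q)) fun x => by
        have := congrArg QuaternionAlgebra.imI (hx x); simpa [EvQ, mkQ] using this
      simpa [neg_eq_zero] using this
    · have := eq_zero_of_Ev (-(pderiv 2 q)) fun x => by
        have := congrArg QuaternionAlgebra.imJ (hx x); simpa [EvQ, mkQ] using this
      simpa [neg_eq_zero] using this
  have heu := euler hq
  rw [Fin.sum_univ_three, hE 0, hE 1, hE 2] at heu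
  simp only [mul_zero, add_zero, zero_add] at heu
  have hq0 : q = 0 := by
    have h2 : ((n + 1 : ℕ) : ℝ) • q = 0 := by
      rw [Nat.cast_smul_eq_nsmul]; exact heu.symm
    have h3 : q = (((n + 1 : ℕ) : ℝ))⁻¹ • (((n + 1 : ℕ) : ℝ) • q) := by
      rw [smul_smul, inv_mul_cancel₀ (by positivity), one_smul]
    rw [h3, h2, smul_zero]
  apply Subtype.ext
  apply Subtype.ext
  exact hq0

theorem mem_range_Phi {n : ℕ} {f : R3 → ℍ[ℝ]} (hf : f ∈ MonoPoly n) :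
    f ∈ LinearMap.range (Phi n) := by
  obtain ⟨⟨p₀, p₁, p₂, hp₀, hp₁, hp₂, hfx⟩, hmono⟩ := hf
  have hf' : f = EvQ p₀ p₁ p₂ := funext fun x => hfx x
  have hD : ∀ x, DbarL (EvQ p₀ p₁ p₂) x = 0 := by
    intro x; rw [← hf']; exact hmono x
  have hcomp : ∀ x : R3,
      Ev (pderiv 0 p₀ - pderiv 1 p₁ - pderiv 2 p₂) x = 0 ∧
      Ev (pderiv 0 p₁ + pderiv 1 p₀) x = 0 ∧
      Ev (pderiv 0 p₂ + pderiv 2 p₀) x = 0 ∧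
      Ev (pderiv 1 p₂ - pderiv 2 p₁) x = 0 := by
    intro x
    have hx := hD x
    rw [DbarL_EvQ] at hx
    refine ⟨congrArg QuaternionAlgebra.re hx, congrArg QuaternionAlgebra.imI hx,
      congrArg QuaternionAlgebra.imJ hx, congrArg QuaternionAlgebra.imK hx⟩
  have E0 : pderiv 0 p₀ - pderiv 1 p₁ - pderiv 2 p₂ = 0 :=
    eq_zero_of_Ev _ fun x => (hcomp x).1
  have E1 : pderiv 0 p₁ + pderiv 1 p₀ = 0 :=
    eq_zero_of_Ev _ fun x => (hcomp x).2.1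
  have E2 : pderiv 0 p₂ + pderiv 2 p₀ = 0 :=
    eq_zero_of_Ev _ fun x => (hcomp x).2.2.1
  have E3 : pderiv 1 p₂ - pderiv 2 p₁ = 0 :=
    eq_zero_of_Ev _ fun x => (hcomp x).2.2.2
  set h' : MvPolynomial (Fin 3) ℝ := X 0 * p₀ - X 1 * p₁ - X 2 * p₂ with hh'
  set c : ℝ := ((n + 1 : ℕ) : ℝ) with hc
  set h : MvPolynomial (Fin 3) ℝ := MvPolynomial.C c⁻¹ * h' with hh
  -- euler sums
  have heu0 := euler hp₀
  have heu1 := euler hp₁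
  have heu2 := euler hp₂
  rw [Fin.sum_univ_three] at heu0 heu1 heu2
  -- derivative computations for h'
  have hd0' : pderiv 0 h' = (n + 1) • p₀ := by
    rw [hh', map_sub, map_sub, pderiv_mul, pderiv_mul, pderiv_mul, pderiv_X_self,
      pderiv_X_of_ne (by decide), pderiv_X_of_ne (by decide), one_mul, zero_mul, zero_mul,
      zero_add, zero_add, succ_nsmul, ← heu0]
    linear_combination (-(X 1 : MvPolynomial (Fin 3) ℝ)) * E1 - (X 2) * E2
  have hd1' : pderiv 1 h' = -((n + 1) • p₁) := by
    rw [hh', map_sub, map_sub, pderiv_mul, pderiv_mul, pderiv_mul, pderiv_X_self,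
      pderiv_X_of_ne (by decide), pderiv_X_of_ne (by decide), one_mul, zero_mul, zero_mul,
      zero_add, zero_add, succ_nsmul, ← heu1]
    linear_combination (X 0 : MvPolynomial (Fin 3) ℝ) * E1 - (X 2) * E3
  have hd2' : pderiv 2 h' = -((n + 1) • p₂) := by
    rw [hh', map_sub, map_sub, pderiv_mul, pderiv_mul, pderiv_mul, pderiv_X_self,
      pderiv_X_of_ne (by decide), pderiv_X_of_ne (by decide), one_mul, zero_mul, zero_mul,
      zero_add, zero_add, succ_nsmul, ← heu2]
    linear_combination (X 0 : MvPolynomial (Fin 3) ℝ) * E2 + (X 1) * E3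
  have hscale : ∀ p : MvPolynomial (Fin 3) ℝ, MvPolynomial.C c⁻¹ * ((n + 1) • p) = p := by
    intro p
    rw [MvPolynomial.C_mul', ← Nat.cast_smul_eq_nsmul ℝ, smul_smul, ← hc,
      inv_mul_cancel₀ (by rw [hc]; positivity), one_smul]
  have hd0 : pderiv 0 h = p₀ := by
    rw [hh, pderiv_C_mul, hd0', hscale]
  have hd1 : pderiv 1 h = -p₁ := by
    rw [hh, pderiv_C_mul, hd1', mul_neg, hscale]
  have hd2 : pderiv 2 h = -p₂ := by
    rw [hh, pderiv_C_mul, hd2', mul_neg, hscale]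
  have hhom : h.IsHomogeneous (n + 1) := by
    have h1 : (X (0 : Fin 3) * p₀).IsHomogeneous (n + 1) := by
      simpa [add_comm] using (isHomogeneous_X ℝ (0 : Fin 3)).mul hp₀
    have h2 : (X (1 : Fin 3) * p₁).IsHomogeneous (n + 1) := by
      simpa [add_comm] using (isHomogeneous_X ℝ (1 : Fin 3)).mul hp₁
    have h3 : (X (2 : Fin 3) * p₂).IsHomogeneous (n + 1) := by
      simpa [add_comm] using (isHomogeneous_X ℝ (2 : Fin 3)).mul hp₂
    exact (((h1.sub h2).sub h3)).C_mul _
  have hlap : lapL h = 0 := by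
    rw [lapL_apply, hd0, hd1, hd2, map_neg, map_neg]
    linear_combination E0
  refine ⟨⟨⟨h, (mem_homogeneousSubmodule _ _).mpr hhom⟩, ?_⟩, ?_⟩
  · exact hlap
  · funext x
    show EvQ (pderiv 0 h) (-(pderiv 1 h)) (-(pderiv 2 h)) x = f x
    rw [hd0, hd1, hd2, neg_neg, neg_neg, hf']

theorem span_eq (n : ℕ) :
    Submodule.span ℝ (MonoPoly n) = LinearMap.range (Phi n) := by
  apply le_antisymm
  · rw [Submodule.span_le]
    intro f hf
    exact mem_range_Phi hf
  · rintro g ⟨h, rfl⟩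
    exact Submodule.subset_span (Phi_mem n h)

set_option synthInstance.maxHeartbeats 1000000 in
set_option maxHeartbeats 1000000 in
theorem final : (∀ n : ℕ, 1 ≤ n →
      Module.finrank ℝ (Submodule.span ℝ (MonoPoly n)) = 2 * n + 3) ∧
    Module.finrank ℝ (Submodule.span ℝ (MonoPoly 0)) = 3 := by
  have key : ∀ n : ℕ, Module.finrank ℝ (Submodule.span ℝ (MonoPoly n)) = 2 * n + 3 := by
    intro n
    rw [span_eq n, LinearMap.finrank_range_of_inj (Phi_inj n), finrank_harm (n + 1) (by omega)]
    omega
  exact ⟨fun n _ => key n, key 0⟩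

/-- The space of `ℝ³`-valued homogeneous monogenic polynomials of degree `n` on `ℝ³`
has real dimension `2n+3` for `n ≥ 1`, and dimension `3` for `n = 0`. -/
theorem finrank_monogenic_polynomials :
    (∀ n : ℕ, 1 ≤ n →
      Module.finrank ℝ (Submodule.span ℝ (MonoPoly n)) = 2 * n + 3) ∧
    Module.finrank ℝ (Submodule.span ℝ (MonoPoly 0)) = 3 :=
  final
end
end

section
/- For n ≥ 1, the space M⁽ⁿ⁾ ∩ M̄⁽ⁿ⁾ of homogeneous monogenic constants of degree n on ℝ³ has real dimension 2, and it is contained in Vec M⁽ⁿ⁾, the space of vector parts of homogeneous monogenic polynomials of degree n. -/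
open scoped Quaternion
open MeasureTheory

noncomputable section

namespace MCaux
open MvPolynomial

lemma add_single_apply (d : Fin 3 →₀ ℕ) (i j : Fin 3) :
    (d + Finsupp.single i 1 : Fin 3 →₀ ℕ) j = d j + (if i = j then 1 else 0) := by
  simp [Finsupp.single_apply]

lemma sub_single_apply (d : Fin 3 →₀ ℕ) (i j : Fin 3) :
    (d - Finsupp.single i 1 : Fin 3 →₀ ℕ) j = d j - (if i = j then 1 else 0) := by
  rw [Finsupp.tsub_apply, Finsupp.single_apply]

/-- coefficient of a partial derivative -/
lemma coeff_pderiv (i : Fin 3) (p : MvPolynomial (Fin 3) ℝ) (d : Fin 3 →₀ ℕ) :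
    coeff d (pderiv i p) = ((d i : ℝ) + 1) * coeff (d + Finsupp.single i 1) p := by
  induction p using MvPolynomial.induction_on' with
  | monomial s a =>
    rw [pderiv_monomial]
    by_cases h : s = d + Finsupp.single i 1
    · subst h
      have h1 : (d + Finsupp.single i 1) - Finsupp.single i 1 = d := by
        ext j; rw [sub_single_apply, add_single_apply]; omega
      have h2 : (d + Finsupp.single i 1 : Fin 3 →₀ ℕ) i = d i + 1 := by
        rw [add_single_apply]; simp
      simp [coeff_monomial, h1, h2]
      ring
    · rcases Nat.eq_zero_or_pos (s i) with hs | hs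
      · have hss : s - Finsupp.single i 1 = s := by
          ext j; rw [sub_single_apply]
          rcases eq_or_ne i j with rfl | hj
          · simp [hs]
          · simp [hj]
        rw [hss]
        simp only [coeff_monomial, if_neg h]
        split
        · next hsd => subst hsd; simp [hs]
        · simp
      · have hne : s - Finsupp.single i 1 ≠ d := by
          intro hc
          apply h
          ext j
          have hj := congrArg (fun f : Fin 3 →₀ ℕ => f j) hc
          simp only [sub_single_apply] at hj
          rw [add_single_apply]
          rcases eq_or_ne i j with rfl | hij
          · rw [if_pos rfl] at hj ⊢; omega
          · simp only [if_neg hij] at hj ⊢; omega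
        simp [coeff_monomial, hne, h]
  | add p q hp hq => simp [hp, hq]; ring

lemma pderiv_comm (i j : Fin 3) (p : MvPolynomial (Fin 3) ℝ) :
    pderiv i (pderiv j p) = pderiv j (pderiv i p) := by
  rcases eq_or_ne i j with rfl | hij
  · rfl
  · ext d
    rw [coeff_pderiv, coeff_pderiv, coeff_pderiv, coeff_pderiv]
    have h1 : (d + Finsupp.single i 1 : Fin 3 →₀ ℕ) j = d j := by
      rw [add_single_apply]; simp [hij]
    have h2 : (d + Finsupp.single j 1 : Fin 3 →₀ ℕ) i = d i := by
      rw [add_single_apply]; simp [Ne.symm hij]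
    rw [h1, h2, add_right_comm]
    ring

lemma weight_single_one (i : Fin 3) :
    (Finsupp.weight (1 : Fin 3 → ℕ)) (Finsupp.single i 1) = 1 := by
  simp [Finsupp.weight_apply, Finsupp.sum_single_index]

lemma isHomogeneous_pderiv {p : MvPolynomial (Fin 3) ℝ} {n : ℕ}
    (h : p.IsHomogeneous (n + 1)) (i : Fin 3) : (pderiv i p).IsHomogeneous n := by
  intro d hd
  rw [coeff_pderiv] at hd
  have hc : coeff (d + Finsupp.single i 1) p ≠ 0 := fun h0 => hd (by simp [h0])
  have hw := h hc
  rw [map_add, weight_single_one] at hw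
  omega

lemma eq_zero_of_pderiv_eq_zero {p : MvPolynomial (Fin 3) ℝ} {n : ℕ}
    (h : p.IsHomogeneous (n + 1)) (hp : ∀ i, pderiv i p = 0) : p = 0 := by
  ext d
  rw [coeff_zero]
  by_cases hd : d.degree = n + 1
  · have hpos : d ≠ 0 := by
      intro h0; rw [h0] at hd; simp [Finsupp.degree] at hd
    obtain ⟨i, hi⟩ : ∃ i, d i ≠ 0 := by
      by_contra hc
      push_neg at hc
      exact hpos (Finsupp.ext hc)
    have key := coeff_pderiv i p (d - Finsupp.single i 1)
    rw [hp i, coeff_zero] at key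
    have hsum : (d - Finsupp.single i 1) + Finsupp.single i 1 = d := by
      ext j; rw [add_single_apply, sub_single_apply]
      rcases eq_or_ne i j with rfl | hj
      · rw [if_pos rfl]; omega
      · simp [hj]
    rw [hsum] at key
    have hne : (((d - Finsupp.single i 1 : Fin 3 →₀ ℕ) i : ℝ)) + 1 ≠ 0 := by positivity
    exact (mul_eq_zero.mp key.symm).resolve_left hne
  · exact h.coeff_eq_zero hd

/-- real and imaginary parts of `(x₁ + i x₂)^n` as polynomials in three variables -/
noncomputable def PQ : ℕ → MvPolynomial (Fin 3) ℝ × MvPolynomial (Fin 3) ℝ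
  | 0 => (1, 0)
  | n+1 => (X 1 * (PQ n).1 - X 2 * (PQ n).2, X 1 * (PQ n).2 + X 2 * (PQ n).1)

noncomputable def Pp (n : ℕ) : MvPolynomial (Fin 3) ℝ := (PQ n).1
noncomputable def Qp (n : ℕ) : MvPolynomial (Fin 3) ℝ := (PQ n).2

lemma Pp_zero : Pp 0 = 1 := rfl
lemma Qp_zero : Qp 0 = 0 := rfl
lemma Pp_succ (n : ℕ) : Pp (n+1) = X 1 * Pp n - X 2 * Qp n := rfl
lemma Qp_succ (n : ℕ) : Qp (n+1) = X 1 * Qp n + X 2 * Pp n := rfl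

lemma hom_PQ (n : ℕ) : (Pp n).IsHomogeneous n ∧ (Qp n).IsHomogeneous n := by
  induction n with
  | zero => exact ⟨isHomogeneous_one _ _, isHomogeneous_zero _ _ _⟩
  | succ n ih =>
    have e : 1 + n = n + 1 := by omega
    refine ⟨?_, ?_⟩
    · rw [Pp_succ]
      exact (e ▸ (((isHomogeneous_X _ _).mul ih.1)).sub (e ▸ (isHomogeneous_X ℝ (2 : Fin 3)).mul ih.2))
    · rw [Qp_succ]
      exact (e ▸ (((isHomogeneous_X _ _).mul ih.2)).add (e ▸ (isHomogeneous_X ℝ (2 : Fin 3)).mul ih.1))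

lemma pderiv0_PQ (n : ℕ) : pderiv 0 (Pp n) = 0 ∧ pderiv 0 (Qp n) = 0 := by
  induction n with
  | zero => simp [Pp_zero, Qp_zero]
  | succ n ih =>
    rw [Pp_succ, Qp_succ]
    simp [pderiv_mul, ih.1, ih.2, pderiv_X_of_ne (show (1:Fin 3) ≠ 0 by decide),
      pderiv_X_of_ne (show (2:Fin 3) ≠ 0 by decide)]

lemma pderiv_PQ (n : ℕ) :
    pderiv 1 (Pp (n+1)) = C ((n:ℝ)+1) * Pp n ∧
    pderiv 2 (Pp (n+1)) = -(C ((n:ℝ)+1) * Qp n) ∧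
    pderiv 1 (Qp (n+1)) = C ((n:ℝ)+1) * Qp n ∧
    pderiv 2 (Qp (n+1)) = C ((n:ℝ)+1) * Pp n := by
  induction n with
  | zero =>
    rw [Pp_succ, Qp_succ, Pp_zero, Qp_zero]
    simp [pderiv_X_of_ne (show (1:Fin 3) ≠ 2 by decide),
      pderiv_X_of_ne (show (2:Fin 3) ≠ 1 by decide)]
  | succ n ih =>
    obtain ⟨h1, h2, h3, h4⟩ := ih
    have hC : (C ((n:ℝ)+1+1) : MvPolynomial (Fin 3) ℝ) = C ((n:ℝ)+1) + 1 := by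
      rw [map_add, map_one]
    rw [Pp_succ (n+1), Qp_succ (n+1), Pp_succ n, Qp_succ n] at *
    refine ⟨?_, ?_, ?_, ?_⟩
    · rw [map_sub, pderiv_mul, pderiv_mul, h1, h3, pderiv_X_self,
        pderiv_X_of_ne (show (2:Fin 3) ≠ 1 by decide)]
      push_cast
      rw [hC]; ring
    · rw [map_sub, pderiv_mul, pderiv_mul, h2, h4, pderiv_X_self,
        pderiv_X_of_ne (show (1:Fin 3) ≠ 2 by decide)]
      push_cast
      rw [hC]; ring
    · rw [map_add, pderiv_mul, pderiv_mul, h3, h1, pderiv_X_self,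
        pderiv_X_of_ne (show (2:Fin 3) ≠ 1 by decide)]
      push_cast
      rw [hC]; ring
    · rw [map_add, pderiv_mul, pderiv_mul, h4, h2, pderiv_X_self,
        pderiv_X_of_ne (show (1:Fin 3) ≠ 2 by decide)]
      push_cast
      rw [hC]; ring

lemma eval_PQ {v : Fin 3 → ℝ} (h1 : v 1 = 1) (h2 : v 2 = 0) (n : ℕ) :
    eval v (Pp n) = 1 ∧ eval v (Qp n) = 0 := by
  induction n with
  | zero => simp [Pp_zero, Qp_zero]
  | succ n ih => rw [Pp_succ, Qp_succ]; simp [h1, h2, ih.1, ih.2]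

/-- homogeneous of degree 0 means constant -/
lemma eq_C_of_hom_zero {p : MvPolynomial (Fin 3) ℝ} (h : p.IsHomogeneous 0) :
    p = C (coeff 0 p) := by
  ext d
  rcases eq_or_ne d 0 with rfl | hd
  · simp
  · rw [coeff_C, if_neg (Ne.symm hd)]
    exact h.coeff_eq_zero (by simp [Finsupp.degree_eq_zero_iff, hd])

/-- classification of monogenic-constant component pairs -/
theorem classify (n : ℕ) : ∀ p₁ p₂ : MvPolynomial (Fin 3) ℝ,
    p₁.IsHomogeneous n → p₂.IsHomogeneous n →
    pderiv 0 p₁ = 0 → pderiv 0 p₂ = 0 →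
    pderiv 1 p₁ + pderiv 2 p₂ = 0 → pderiv 1 p₂ - pderiv 2 p₁ = 0 →
    ∃ a b : ℝ, p₁ = C a * Pp n + C b * Qp n ∧ p₂ = C b * Pp n - C a * Qp n := by
  induction n with
  | zero =>
    intro p₁ p₂ h1 h2 _ _ _ _
    exact ⟨coeff 0 p₁, coeff 0 p₂,
      by rw [Pp_zero, Qp_zero, mul_one, mul_zero, add_zero]; exact eq_C_of_hom_zero h1,
      by rw [Pp_zero, Qp_zero, mul_one, mul_zero, sub_zero]; exact eq_C_of_hom_zero h2⟩
  | succ n ih =>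
    intro p₁ p₂ h1 h2 h01 h02 hcr1 hcr2
    obtain ⟨a', b', ha, hb⟩ := ih (pderiv 1 p₁) (pderiv 1 p₂)
      (isHomogeneous_pderiv h1 1) (isHomogeneous_pderiv h2 1)
      (by rw [pderiv_comm 0 1, h01, map_zero])
      (by rw [pderiv_comm 0 1, h02, map_zero])
      (by rw [pderiv_comm 2 1, ← map_add, hcr1, map_zero])
      (by rw [pderiv_comm 2 1, ← map_sub, hcr2, map_zero])
    have h21 : pderiv 2 p₁ = pderiv 1 p₂ := (sub_eq_zero.mp hcr2).symm
    have h22 : pderiv 2 p₂ = -pderiv 1 p₁ := by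
      rw [← sub_eq_zero]; rw [← hcr1]; ring
    have hn1 : ((n:ℝ)+1) ≠ 0 := by positivity
    refine ⟨a' / ((n:ℝ)+1), b' / ((n:ℝ)+1), ?_, ?_⟩
    · have ha'' : (C a' : MvPolynomial (Fin 3) ℝ) = C ((n:ℝ)+1) * C (a' / ((n:ℝ)+1)) := by
        rw [← map_mul, mul_div_cancel₀ _ hn1]
      have hb'' : (C b' : MvPolynomial (Fin 3) ℝ) = C ((n:ℝ)+1) * C (b' / ((n:ℝ)+1)) := by
        rw [← map_mul, mul_div_cancel₀ _ hn1]
      rw [← sub_eq_zero]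
      refine eq_zero_of_pderiv_eq_zero (n := n)
        (h1.sub ((((hom_PQ (n+1)).1.C_mul _)).add ((hom_PQ (n+1)).2.C_mul _))) ?_
      intro i
      fin_cases i
      · show pderiv 0 _ = 0
        rw [map_sub, map_add, pderiv_C_mul, pderiv_C_mul,
          (pderiv0_PQ (n+1)).1, (pderiv0_PQ (n+1)).2, h01]
        ring
      · show pderiv 1 _ = 0
        rw [map_sub, map_add, pderiv_C_mul, pderiv_C_mul,
          (pderiv_PQ n).1, (pderiv_PQ n).2.2.1, ha, ha'', hb'']
        ring
      · show pderiv 2 _ = 0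
        rw [map_sub, map_add, pderiv_C_mul, pderiv_C_mul,
          (pderiv_PQ n).2.1, (pderiv_PQ n).2.2.2, h21, hb, ha'', hb'']
        ring
    · have ha'' : (C a' : MvPolynomial (Fin 3) ℝ) = C ((n:ℝ)+1) * C (a' / ((n:ℝ)+1)) := by
        rw [← map_mul, mul_div_cancel₀ _ hn1]
      have hb'' : (C b' : MvPolynomial (Fin 3) ℝ) = C ((n:ℝ)+1) * C (b' / ((n:ℝ)+1)) := by
        rw [← map_mul, mul_div_cancel₀ _ hn1]
      rw [← sub_eq_zero]
      refine eq_zero_of_pderiv_eq_zero (n := n)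
        (h2.sub ((((hom_PQ (n+1)).1.C_mul _)).sub ((hom_PQ (n+1)).2.C_mul _))) ?_
      intro i
      fin_cases i
      · show pderiv 0 _ = 0
        rw [map_sub, map_sub, pderiv_C_mul, pderiv_C_mul,
          (pderiv0_PQ (n+1)).1, (pderiv0_PQ (n+1)).2, h02]
        ring
      · show pderiv 1 _ = 0
        rw [map_sub, map_sub, pderiv_C_mul, pderiv_C_mul,
          (pderiv_PQ n).1, (pderiv_PQ n).2.2.1, hb, ha'', hb'']
        ring
      · show pderiv 2 _ = 0
        rw [map_sub, map_sub, pderiv_C_mul, pderiv_C_mul,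
          (pderiv_PQ n).2.1, (pderiv_PQ n).2.2.2, h22, ha, ha'', hb'']
        ring

/-! ### Analysis: derivatives of polynomial evaluation -/

/-- evaluation of a polynomial as a function on `R3` -/
def F (p : MvPolynomial (Fin 3) ℝ) (x : R3) : ℝ :=
  eval (fun i => x i) p

@[simp] lemma F_add (p q : MvPolynomial (Fin 3) ℝ) (x : R3) :
    F (p + q) x = F p x + F q x := by simp [F]
@[simp] lemma F_sub (p q : MvPolynomial (Fin 3) ℝ) (x : R3) :
    F (p - q) x = F p x - F q x := by simp [F]
@[simp] lemma F_zero (x : R3) : F (0 : MvPolynomial (Fin 3) ℝ) x = 0 := by simp [F]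

lemma hasFDerivAt_F (p : MvPolynomial (Fin 3) ℝ) (x : R3) :
    HasFDerivAt (F p)
      (∑ j : Fin 3, F (pderiv j p) x • (EuclideanSpace.proj j : R3 →L[ℝ] ℝ)) x := by
  induction p using MvPolynomial.induction_on with
  | C a =>
    have : F (C a : MvPolynomial (Fin 3) ℝ) = fun _ => a := by
      funext y; simp [F]
    rw [this]
    simp only [pderiv_C]
    rw [show (∑ j : Fin 3, F (0 : MvPolynomial (Fin 3) ℝ) x • (EuclideanSpace.proj j : R3 →L[ℝ] ℝ))
      = 0 from by simp [F]]
    exact hasFDerivAt_const a x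
  | add p q hp hq =>
    have : F (p + q) = fun y => F p y + F q y := by funext y; simp [F]
    rw [this]
    refine (hp.add hq).congr_fderiv (Eq.symm ?_)
    simp [F, add_smul, Finset.sum_add_distrib]
  | mul_X p i hp =>
    have hXi : HasFDerivAt (fun y : R3 => y i) (EuclideanSpace.proj i : R3 →L[ℝ] ℝ) x :=
      (EuclideanSpace.proj i : R3 →L[ℝ] ℝ).hasFDerivAt
    have : F (p * X i) = fun y => F p y * y i := by funext y; simp [F]
    rw [this]
    refine (hp.mul hXi).congr_fderiv (Eq.symm ?_)
    have expand : ∀ j : Fin 3, F (pderiv j (p * X i)) x = F (pderiv j p) x * x i +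
        (if j = i then F p x else 0) := by
      intro j
      rcases eq_or_ne j i with rfl | hj
      · simp [F, pderiv_mul, pderiv_X_self]; ring
      · simp [F, pderiv_mul, pderiv_X_of_ne (Ne.symm hj), hj]; ring
    rw [Finset.sum_congr rfl fun j _ => by rw [expand j]]
    simp only [add_smul, Finset.sum_add_distrib, ite_smul, zero_smul]
    rw [Finset.sum_ite_eq' Finset.univ i (fun j => F p x • (EuclideanSpace.proj j : R3 →L[ℝ] ℝ))]
    simp only [Finset.mem_univ, if_pos]
    rw [Finset.smul_sum]
    simp_rw [smul_smul]
    rw [add_comm]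
    congr 1
    exact Finset.sum_congr rfl fun j _ => by rw [mul_comm]

lemma L_apply (p : MvPolynomial (Fin 3) ℝ) (x : R3) (k : Fin 3) :
    (∑ j : Fin 3, F (pderiv j p) x • (EuclideanSpace.proj j : R3 →L[ℝ] ℝ))
      (EuclideanSpace.single k 1) = F (pderiv k p) x := by
  simp only [ContinuousLinearMap.coe_sum', Finset.sum_apply, ContinuousLinearMap.coe_smul',
    Pi.smul_apply]
  have : ∀ j : Fin 3, (EuclideanSpace.proj j : R3 →L[ℝ] ℝ) (EuclideanSpace.single k 1)
      = if j = k then 1 else 0 := by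
    intro j; simp [EuclideanSpace.single_apply]
  rw [Finset.sum_congr rfl fun j _ => by rw [this j]]
  simp [apply_ite, Finset.sum_ite_eq']

lemma mkQ_eq (a b c : ℝ) : mkQ a b c = a • (1 : ℍ[ℝ]) + b • e1 + c • e2 := by
  apply Quaternion.ext <;> simp <;> simp [mkQ, e1, e2]

lemma F_eq_zero {p : MvPolynomial (Fin 3) ℝ} (h : ∀ x : R3, F p x = 0) : p = 0 := by
  apply MvPolynomial.funext
  intro v
  have := h ((WithLp.equiv 2 (Fin 3 → ℝ)).symm v)
  simpa [F] using this

/-- partial derivatives of a function given by polynomial components -/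
lemma pd_rep {f : R3 → ℍ[ℝ]} {p₀ p₁ p₂ : MvPolynomial (Fin 3) ℝ}
    (hf : ∀ x, f x = mkQ (F p₀ x) (F p₁ x) (F p₂ x)) (j : Fin 3) (x : R3) :
    pd j f x = mkQ (F (pderiv j p₀) x) (F (pderiv j p₁) x) (F (pderiv j p₂) x) := by
  have hfun : f = fun x => F p₀ x • (1 : ℍ[ℝ]) + F p₁ x • e1 + F p₂ x • e2 :=
    funext fun x => by rw [hf x, mkQ_eq]
  have hD : HasFDerivAt f
      ((((∑ j : Fin 3, F (pderiv j p₀) x • (EuclideanSpace.proj j : R3 →L[ℝ] ℝ)).smulRight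
          (1 : ℍ[ℝ])) +
        ((∑ j : Fin 3, F (pderiv j p₁) x • (EuclideanSpace.proj j : R3 →L[ℝ] ℝ)).smulRight e1)) +
        ((∑ j : Fin 3, F (pderiv j p₂) x •
          (EuclideanSpace.proj j : R3 →L[ℝ] ℝ)).smulRight e2)) x := by
    rw [hfun]
    exact (((hasFDerivAt_F p₀ x).smul_const (1 : ℍ[ℝ])).add
      ((hasFDerivAt_F p₁ x).smul_const e1)).add ((hasFDerivAt_F p₂ x).smul_const e2)
  rw [pd, hD.fderiv]
  rw [ContinuousLinearMap.add_apply, ContinuousLinearMap.add_apply,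
    ContinuousLinearMap.smulRight_apply, ContinuousLinearMap.smulRight_apply,
    ContinuousLinearMap.smulRight_apply, L_apply, L_apply, L_apply, mkQ_eq]

lemma DbarL_formula (a₀ b₀ c₀ a₁ b₁ c₁ a₂ b₂ c₂ : ℝ) :
    mkQ a₀ b₀ c₀ + e1 * mkQ a₁ b₁ c₁ + e2 * mkQ a₂ b₂ c₂ =
      (⟨a₀ - b₁ - c₂, b₀ + a₁, c₀ + a₂, c₁ - b₂⟩ : ℍ[ℝ]) := by
  apply Quaternion.ext <;>
    simp [Quaternion.re_mul, Quaternion.imI_mul, Quaternion.imJ_mul,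
      Quaternion.imK_mul] <;> simp [mkQ, e1, e2] <;> ring

lemma DL_formula (a₀ b₀ c₀ a₁ b₁ c₁ a₂ b₂ c₂ : ℝ) :
    mkQ a₀ b₀ c₀ - e1 * mkQ a₁ b₁ c₁ - e2 * mkQ a₂ b₂ c₂ =
      (⟨a₀ + b₁ + c₂, b₀ - a₁, c₀ - a₂, -c₁ + b₂⟩ : ℍ[ℝ]) := by
  apply Quaternion.ext <;>
    simp [Quaternion.re_mul, Quaternion.imI_mul, Quaternion.imJ_mul,
      Quaternion.imK_mul] <;> simp [mkQ, e1, e2] <;> ring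

/-- the 2-parameter family of monogenic constants -/
def phi (n : ℕ) : (ℝ × ℝ) →ₗ[ℝ] (R3 → ℍ[ℝ]) where
  toFun ab := fun x => mkQ 0 (ab.1 * F (Pp n) x + ab.2 * F (Qp n) x)
      (ab.2 * F (Pp n) x - ab.1 * F (Qp n) x)
  map_add' u v := by
    funext x
    show mkQ _ _ _ = mkQ _ _ _ + mkQ _ _ _
    apply Quaternion.ext <;> simp <;> simp [mkQ] <;> ring
  map_smul' r u := by
    funext x
    show mkQ _ _ _ = r • mkQ _ _ _
    apply Quaternion.ext <;> simp <;> simp [mkQ] <;> ring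

lemma phi_apply (n : ℕ) (ab : ℝ × ℝ) (x : R3) :
    phi n ab x = mkQ 0 (ab.1 * F (Pp n) x + ab.2 * F (Qp n) x)
      (ab.2 * F (Pp n) x - ab.1 * F (Qp n) x) := rfl

lemma phi_rep (n : ℕ) (ab : ℝ × ℝ) (x : R3) :
    phi n ab x = mkQ (F (0 : MvPolynomial (Fin 3) ℝ) x)
      (F (C ab.1 * Pp n + C ab.2 * Qp n) x) (F (C ab.2 * Pp n - C ab.1 * Qp n) x) := by
  show mkQ _ _ _ = _
  apply Quaternion.ext <;> simp [mkQ, F]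

lemma phi_mem (m : ℕ) (ab : ℝ × ℝ) :
    phi (m+1) ab ∈ MonoPoly (m+1) ∩ AntiPoly (m+1) := by
  set n := m + 1 with hn
  set p₁ : MvPolynomial (Fin 3) ℝ := C ab.1 * Pp n + C ab.2 * Qp n with hp₁
  set p₂ : MvPolynomial (Fin 3) ℝ := C ab.2 * Pp n - C ab.1 * Qp n with hp₂
  have hrep : ∀ x, phi n ab x = mkQ (F (0 : MvPolynomial (Fin 3) ℝ) x) (F p₁ x) (F p₂ x) :=
    phi_rep n ab
  have hex : ∃ p₀ p₁' p₂' : MvPolynomial (Fin 3) ℝ,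
      p₀.IsHomogeneous n ∧ p₁'.IsHomogeneous n ∧ p₂'.IsHomogeneous n ∧
      ∀ x : R3, phi n ab x = mkQ (MvPolynomial.eval (fun i => x i) p₀)
        (MvPolynomial.eval (fun i => x i) p₁') (MvPolynomial.eval (fun i => x i) p₂') :=
    ⟨0, p₁, p₂, isHomogeneous_zero _ _ _,
      ((hom_PQ n).1.C_mul _).add ((hom_PQ n).2.C_mul _),
      ((hom_PQ n).1.C_mul _).sub ((hom_PQ n).2.C_mul _),
      fun x => hrep x⟩
  -- polynomial derivative identities
  have hd01 : pderiv 0 p₁ = 0 := by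
    rw [hp₁, map_add, pderiv_C_mul, pderiv_C_mul, (pderiv0_PQ n).1, (pderiv0_PQ n).2]; ring
  have hd02 : pderiv 0 p₂ = 0 := by
    rw [hp₂, map_sub, pderiv_C_mul, pderiv_C_mul, (pderiv0_PQ n).1, (pderiv0_PQ n).2]; ring
  have hsum : pderiv 1 p₁ + pderiv 2 p₂ = 0 := by
    rw [hp₁, hp₂, map_add, map_sub, pderiv_C_mul, pderiv_C_mul, pderiv_C_mul, pderiv_C_mul,
      (pderiv_PQ m).1, (pderiv_PQ m).2.1, (pderiv_PQ m).2.2.1, (pderiv_PQ m).2.2.2]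
    ring
  have hdiff : pderiv 1 p₂ - pderiv 2 p₁ = 0 := by
    rw [hp₁, hp₂, map_add, map_sub, pderiv_C_mul, pderiv_C_mul, pderiv_C_mul, pderiv_C_mul,
      (pderiv_PQ m).1, (pderiv_PQ m).2.1, (pderiv_PQ m).2.2.1, (pderiv_PQ m).2.2.2]
    ring
  have hFsum : ∀ x : R3, F (pderiv 1 p₁) x + F (pderiv 2 p₂) x = 0 := fun x => by
    rw [← F_add, hsum, F_zero]
  have hFdiff : ∀ x : R3, F (pderiv 1 p₂) x - F (pderiv 2 p₁) x = 0 := fun x => by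
    rw [← F_sub, hdiff, F_zero]
  constructor
  · refine ⟨hex, fun x => ?_⟩
    rw [DbarL, pd_rep hrep, pd_rep hrep, pd_rep hrep, DbarL_formula]
    apply Quaternion.ext <;>
      simp [map_zero, hd01, hd02]
    · linarith [hFsum x]
    · linarith [hFdiff x]
  · refine ⟨hex, fun x => ?_⟩
    rw [DL, pd_rep hrep, pd_rep hrep, pd_rep hrep, DL_formula]
    apply Quaternion.ext <;>
      simp [map_zero, hd01, hd02]
    · linarith [hFsum x]
    · linarith [hFdiff x]

lemma mem_phi {m : ℕ} {f : R3 → ℍ[ℝ]}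
    (hf : f ∈ MonoPoly (m+1) ∩ AntiPoly (m+1)) : ∃ ab : ℝ × ℝ, f = phi (m+1) ab := by
  obtain ⟨⟨⟨p₀, p₁, p₂, h₀, h₁, h₂, hfx⟩, hM⟩, ⟨_, hA⟩⟩ := hf
  have hrep : ∀ x, f x = mkQ (F p₀ x) (F p₁ x) (F p₂ x) := hfx
  have comp : ∀ x : R3,
      (F (pderiv 0 p₀) x - F (pderiv 1 p₁) x - F (pderiv 2 p₂) x = 0) ∧
      (F (pderiv 0 p₁) x + F (pderiv 1 p₀) x = 0) ∧
      (F (pderiv 0 p₂) x + F (pderiv 2 p₀) x = 0) ∧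
      (F (pderiv 1 p₂) x - F (pderiv 2 p₁) x = 0) := by
    intro x
    have h := hM x
    rw [DbarL, pd_rep hrep, pd_rep hrep, pd_rep hrep, DbarL_formula] at h
    refine ⟨?_, ?_, ?_, ?_⟩
    · simpa using congrArg QuaternionAlgebra.re h
    · simpa using congrArg QuaternionAlgebra.imI h
    · simpa using congrArg QuaternionAlgebra.imJ h
    · simpa using congrArg QuaternionAlgebra.imK h
  have comp' : ∀ x : R3,
      (F (pderiv 0 p₀) x + F (pderiv 1 p₁) x + F (pderiv 2 p₂) x = 0) ∧
      (F (pderiv 0 p₁) x - F (pderiv 1 p₀) x = 0) ∧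
      (F (pderiv 0 p₂) x - F (pderiv 2 p₀) x = 0) := by
    intro x
    have h := hA x
    rw [DL, pd_rep hrep, pd_rep hrep, pd_rep hrep, DL_formula] at h
    refine ⟨?_, ?_, ?_⟩
    · simpa using congrArg QuaternionAlgebra.re h
    · simpa using congrArg QuaternionAlgebra.imI h
    · simpa using congrArg QuaternionAlgebra.imJ h
  have h00 : pderiv 0 p₀ = 0 :=
    F_eq_zero fun x => by linarith [(comp x).1, (comp' x).1, (comp x).2.2.2]
  have h10 : pderiv 1 p₀ = 0 :=
    F_eq_zero fun x => by linarith [(comp x).2.1, (comp' x).2.1]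
  have h20 : pderiv 2 p₀ = 0 :=
    F_eq_zero fun x => by linarith [(comp x).2.2.1, (comp' x).2.2]
  have h01 : pderiv 0 p₁ = 0 :=
    F_eq_zero fun x => by linarith [(comp x).2.1, (comp' x).2.1]
  have h02 : pderiv 0 p₂ = 0 :=
    F_eq_zero fun x => by linarith [(comp x).2.2.1, (comp' x).2.2]
  have hcr1 : pderiv 1 p₁ + pderiv 2 p₂ = 0 :=
    F_eq_zero fun x => by
      rw [F_add]
      linarith [(comp x).1, (comp' x).1]
  have hcr2 : pderiv 1 p₂ - pderiv 2 p₁ = 0 :=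
    F_eq_zero fun x => by
      rw [F_sub]
      linarith [(comp x).2.2.2]
  have hp₀ : p₀ = 0 :=
    eq_zero_of_pderiv_eq_zero (n := m) h₀ (by
      intro i
      fin_cases i
      exacts [h00, h10, h20])
  obtain ⟨a, b, hP1, hP2⟩ := classify (m+1) p₁ p₂ h₁ h₂ h01 h02 hcr1 hcr2
  refine ⟨(a, b), funext fun x => ?_⟩
  rw [hrep x, phi_rep (m+1) (a, b) x, hp₀, hP1, hP2]

end MCaux

/-- For `n ≥ 1`, the homogeneous monogenic constants of degree `n` form a real vector
space of dimension `2`, contained in the space of vector parts of homogeneous monogenic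
polynomials of degree `n`. -/
theorem monogenic_constants_dim_two_and_sub_vec (n : ℕ) (hn : 1 ≤ n) :
    Module.finrank ℝ (Submodule.span ℝ (MonoPoly n ∩ AntiPoly n)) = 2 ∧
    (MonoPoly n ∩ AntiPoly n) ⊆
      {g | ∃ f ∈ MonoPoly n, ∀ x, g x = mkQ 0 (f x).imI (f x).imJ} := by
  obtain ⟨m, rfl⟩ : ∃ m, n = m + 1 := ⟨n - 1, by omega⟩
  constructor
  · have hspan : Submodule.span ℝ (MonoPoly (m+1) ∩ AntiPoly (m+1))
        = LinearMap.range (MCaux.phi (m+1)) := by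
      apply le_antisymm
      · rw [Submodule.span_le]
        intro f hf
        obtain ⟨ab, rfl⟩ := MCaux.mem_phi hf
        exact ⟨ab, rfl⟩
      · rintro f ⟨ab, rfl⟩
        exact Submodule.subset_span (MCaux.phi_mem m ab)
    rw [hspan]
    have hinj : Function.Injective (MCaux.phi (m+1)) := by
      intro u v h
      set x₀ : R3 := EuclideanSpace.single 1 (1:ℝ) with hx₀
      have hv1 : (fun i => x₀ i) 1 = 1 := by simp [hx₀, EuclideanSpace.single_apply]
      have hv2 : (fun i => x₀ i) 2 = 0 := by simp [hx₀, EuclideanSpace.single_apply]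
      have hPQ := MCaux.eval_PQ hv1 hv2 (m+1)
      have hFP : MCaux.F (MCaux.Pp (m+1)) x₀ = 1 := hPQ.1
      have hFQ : MCaux.F (MCaux.Qp (m+1)) x₀ = 0 := hPQ.2
      have hx := congrFun h x₀
      have h1 : u.1 * 1 + u.2 * 0 = v.1 * 1 + v.2 * 0 := by
        have := congrArg QuaternionAlgebra.imI hx
        simpa [MCaux.phi_apply, mkQ, hFP, hFQ] using this
      have h2 : u.2 * 1 - u.1 * 0 = v.2 * 1 - v.1 * 0 := by
        have := congrArg QuaternionAlgebra.imJ hx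
        simpa [MCaux.phi_apply, mkQ, hFP, hFQ] using this
      have : u.1 = v.1 := by linarith
      have : u.2 = v.2 := by linarith
      exact Prod.ext ‹u.1 = v.1› ‹u.2 = v.2›
    rw [LinearMap.finrank_range_of_inj hinj, Module.finrank_prod, Module.finrank_self]
  · intro f hf
    refine ⟨f, hf.1, fun x => ?_⟩
    obtain ⟨ab, hfe⟩ := MCaux.mem_phi hf
    have hx := congrFun hfe x
    apply Quaternion.ext <;> rw [hx] <;> simp [MCaux.phi_apply, mkQ]
end
end
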